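/- The integral ∫₀^∞ 4θ²·exp(−2θ)/(θ − 1)² dθ diverges (equals +∞). Consequently, for the reverse relative entropy regularization (f(x) = −log x) with reference probability measure Q having Lebesgue density 4θ²·exp(−2θ) on [0,∞) and risk function L(θ) = (θ − 1)², the condition ∫ 1/(L(θ) + t*) dQ(θ) < ∞ fails at t* = 0, so t*_{Q,z} = 0 does not belong to the set B and B = (0, ∞) is open from the left. -/

import Mathlib

open MeasureTheory Real Set
open scoped ENNReal

private lemma aux_lint_inv_sq_Ioo01 :
    ∫⁻ x in Ioo (0:ℝ) 1, ENNReal.ofReal ((x ^ 2)⁻¹) = ⊤ := by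
  by_contra h
  have hmeas : AEStronglyMeasurable (fun x : ℝ => (x ^ 2)⁻¹)
      (volume.restrict (Ioo (0:ℝ) 1)) :=
    ((measurable_id.pow_const 2).inv).aestronglyMeasurable
  have hnn : 0 ≤ᵐ[volume.restrict (Ioo (0:ℝ) 1)] fun x : ℝ => (x ^ 2)⁻¹ :=
    Filter.Eventually.of_forall fun x => inv_nonneg.2 (sq_nonneg x)
  have hInt : IntegrableOn (fun x : ℝ => (x ^ 2)⁻¹) (Ioo (0:ℝ) 1) :=
    (lintegral_ofReal_ne_top_iff_integrable hmeas hnn).1 h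
  have hInt' : IntegrableOn (fun x : ℝ => x ^ (-2 : ℝ)) (Ioo (0:ℝ) 1) := by
    refine hInt.congr_fun (fun x hx => ?_) measurableSet_Ioo
    rw [rpow_neg hx.1.le, rpow_two]
  rw [intervalIntegral.integrableOn_Ioo_rpow_iff one_pos] at hInt'
  norm_num at hInt'

private lemma aux_lint_inv_sq_Ioo12 :
    ∫⁻ x in Ioo (1:ℝ) 2, ENNReal.ofReal (((x - 1) ^ 2)⁻¹) = ⊤ := by
  have hmp := measurePreserving_add_right (volume : Measure ℝ) 1
  have h := hmp.setLIntegral_comp_emb (measurableEmbedding_addRight 1)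
    (fun x => ENNReal.ofReal (((x - 1) ^ 2)⁻¹)) (Ioo (0:ℝ) 1)
  simp only [add_sub_cancel_right] at h
  rw [show (fun x => x + (1:ℝ)) '' Ioo 0 1 = Ioo 1 2 by
    rw [image_add_const_Ioo]; norm_num] at h
  rw [← h, aux_lint_inv_sq_Ioo01]

theorem erm_reverse_kl_example_B_open
    (Q : Measure ℝ) (L : ℝ → ℝ)
    (hQ : Q = (volume.restrict (Ici (0 : ℝ))).withDensity
      (fun θ => ENNReal.ofReal (4 * θ ^ 2 * Real.exp (-(2 * θ)))))
    (hL : ∀ θ, L θ = (θ - 1) ^ 2)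
    (B : Set ℝ)
    (hB : B = {t : ℝ | (∀ᵐ θ ∂Q, 0 < L θ + t) ∧
      ∫⁻ θ, ENNReal.ofReal (1 / (L θ + t)) ∂Q < ⊤}) :
    (∫⁻ θ in Ioi (0 : ℝ),
        ENNReal.ofReal (4 * θ ^ 2 * Real.exp (-(2 * θ)) / (θ - 1) ^ 2) = ⊤) ∧
    ¬ (∫⁻ θ, ENNReal.ofReal (1 / (L θ + 0)) ∂Q < ⊤) ∧
    (0 : ℝ) ∉ B ∧ sInf B = 0 ∧ B = Ioi (0 : ℝ) := by
  -- Part 1: divergence of the integral over (0,∞)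
  have P1 : ∫⁻ θ in Ioi (0 : ℝ),
      ENNReal.ofReal (4 * θ ^ 2 * Real.exp (-(2 * θ)) / (θ - 1) ^ 2) = ⊤ := by
    rw [eq_top_iff]
    calc (⊤ : ℝ≥0∞)
        = ENNReal.ofReal (4 * Real.exp (-4)) *
            ∫⁻ x in Ioo (1:ℝ) 2, ENNReal.ofReal (((x - 1) ^ 2)⁻¹) := by
          rw [aux_lint_inv_sq_Ioo12,
            ENNReal.mul_top ((ENNReal.ofReal_pos.2 (by positivity)).ne')]
      _ = ∫⁻ x in Ioo (1:ℝ) 2,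
            ENNReal.ofReal (4 * Real.exp (-4) * ((x - 1) ^ 2)⁻¹) := by
          rw [← lintegral_const_mul' _ _ ENNReal.ofReal_ne_top]
          refine lintegral_congr fun x => ?_
          exact (ENNReal.ofReal_mul (by positivity)).symm
      _ ≤ ∫⁻ x in Ioo (1:ℝ) 2,
            ENNReal.ofReal (4 * x ^ 2 * Real.exp (-(2 * x)) / (x - 1) ^ 2) := by
          refine setLIntegral_mono' measurableSet_Ioo fun x hx => ?_
          refine ENNReal.ofReal_le_ofReal ?_
          rw [div_eq_mul_inv]
          refine mul_le_mul_of_nonneg_right ?_ (by positivity)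
          have h1 : Real.exp (-4) ≤ Real.exp (-(2 * x)) :=
            Real.exp_le_exp.2 (by linarith [hx.2])
          have h2 : (1:ℝ) ≤ x ^ 2 := by nlinarith [hx.1]
          nlinarith [Real.exp_pos (-(2 * x)), Real.exp_pos (-4)]
      _ ≤ _ := lintegral_mono_set fun x hx => lt_trans one_pos hx.1
  -- Part 2: the normalization integral at t = 0 is infinite
  have hdmeas : Measurable fun θ : ℝ =>
      ENNReal.ofReal (4 * θ ^ 2 * Real.exp (-(2 * θ))) := by
    refine Measurable.ennreal_ofReal ?_
    exact (measurable_const.mul (measurable_id.pow_const 2)).mul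
      ((measurable_id.const_mul 2).neg.exp)
  have hLmeas : Measurable L := by
    have : L = fun θ => (θ - 1) ^ 2 := funext hL
    rw [this]; exact (measurable_id.sub_const 1).pow_const 2
  have hfmeas : Measurable fun θ : ℝ => ENNReal.ofReal (1 / (L θ + 0)) :=
    (measurable_const.div (hLmeas.add_const 0)).ennreal_ofReal
  have P2 : ∫⁻ θ, ENNReal.ofReal (1 / (L θ + 0)) ∂Q = ⊤ := by
    rw [hQ, lintegral_withDensity_eq_lintegral_mul _ hdmeas hfmeas,
      ← restrict_Ioi_eq_restrict_Ici, ← P1]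
    refine setLIntegral_congr_fun measurableSet_Ioi
      (fun θ _ => ?_)
    simp only [Pi.mul_apply, hL, add_zero]
    rw [← ENNReal.ofReal_mul (by positivity), mul_one_div]
  have P2' : ¬ (∫⁻ θ, ENNReal.ofReal (1 / (L θ + 0)) ∂Q < ⊤) := by
    exact fun h => h.ne P2
  -- 0 ∉ B
  have h0B : (0:ℝ) ∉ B := by
    rw [hB]
    rintro ⟨-, hfin⟩
    exact P2' hfin
  -- B = Ioi 0
  have hQfin : Q univ < ⊤ := by
    have hInt0 : IntegrableOn (fun x : ℝ => x ^ (2:ℝ) * Real.exp (-2 * x ^ (1:ℝ)))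
        (Ioi (0:ℝ)) :=
      integrableOn_rpow_mul_exp_neg_mul_rpow (by norm_num) (by norm_num) (by norm_num)
    have hInt : IntegrableOn (fun x : ℝ => 4 * x ^ 2 * Real.exp (-(2 * x)))
        (Ici (0:ℝ)) := by
      have h4 : IntegrableOn (fun x : ℝ =>
          4 * (x ^ (2:ℝ) * Real.exp (-2 * x ^ (1:ℝ)))) (Ioi (0:ℝ)) :=
        hInt0.const_mul 4
      have hcongr : IntegrableOn (fun x : ℝ => 4 * x ^ 2 * Real.exp (-(2 * x)))
          (Ioi (0:ℝ)) := by
        refine h4.congr_fun (fun x hx => ?_) measurableSet_Ioi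
        simp only [rpow_two, rpow_one]
        ring_nf
      rwa [IntegrableOn, ← restrict_Ioi_eq_restrict_Ici]
    rw [hQ, withDensity_apply _ MeasurableSet.univ, Measure.restrict_univ]
    have := (lintegral_ofReal_ne_top_iff_integrable
      (f := fun x : ℝ => 4 * x ^ 2 * Real.exp (-(2 * x)))
      (μ := volume.restrict (Ici (0:ℝ)))
      ((measurable_const.mul (measurable_id.pow_const 2)).mul
        ((measurable_id.const_mul 2).neg.exp)).aestronglyMeasurable
      (Filter.Eventually.of_forall fun x => by positivity)).2 hInt
    exact lt_top_iff_ne_top.2 this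
  have hBI : B = Ioi (0:ℝ) := by
    ext t
    constructor
    · intro ht
      by_contra hle
      rw [mem_Ioi, not_lt] at hle
      rcases lt_or_eq_of_le hle with hlt | heq
      · -- t < 0 : a.e. positivity fails
        rw [hB] at ht
        obtain ⟨hae, -⟩ := ht
        set δ := min (Real.sqrt (-t)) 1 with hδ
        have hδpos : 0 < δ := lt_min (Real.sqrt_pos.2 (by linarith)) one_pos
        have hsub : Ioo (1:ℝ) (1 + δ) ⊆ {θ | ¬ 0 < L θ + t} := by
          intro θ hθ
          simp only [mem_setOf_eq, not_lt, hL]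
          have h1 : 0 < θ - 1 := by linarith [hθ.1]
          have h2 : θ - 1 < Real.sqrt (-t) :=
            lt_of_lt_of_le (by linarith [hθ.2]) (min_le_left _ _)
          have h3 : (θ - 1) ^ 2 < Real.sqrt (-t) ^ 2 := by
            exact pow_lt_pow_left₀ h2 h1.le (by norm_num)
          rw [Real.sq_sqrt (by linarith : (0:ℝ) ≤ -t)] at h3
          linarith
        have hzero : Q (Ioo (1:ℝ) (1 + δ)) = 0 :=
          measure_mono_null hsub (ae_iff.1 hae)
        have hpos : 0 < Q (Ioo (1:ℝ) (1 + δ)) := by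
          have hss : Ioo (1:ℝ) (1 + δ) ∩ Ici 0 = Ioo (1:ℝ) (1 + δ) :=
            inter_eq_left.2 fun θ hθ => le_of_lt (lt_trans one_pos hθ.1)
          rw [hQ, withDensity_apply _ measurableSet_Ioo,
            Measure.restrict_restrict measurableSet_Ioo, hss]
          calc (0:ℝ≥0∞)
              < ENNReal.ofReal (4 * Real.exp (-4)) * volume (Ioo (1:ℝ) (1 + δ)) := by
                rw [Real.volume_Ioo]
                refine ENNReal.mul_pos ?_ ?_
                · exact (ENNReal.ofReal_pos.2 (by positivity)).ne'
                · simp only [add_sub_cancel_left, ne_eq, ENNReal.ofReal_eq_zero, not_le]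
                  exact hδpos
            _ = ∫⁻ θ in Ioo (1:ℝ) (1 + δ), ENNReal.ofReal (4 * Real.exp (-4)) :=
                (setLIntegral_const _ _).symm
            _ ≤ ∫⁻ θ in Ioo (1:ℝ) (1 + δ),
                  ENNReal.ofReal (4 * θ ^ 2 * Real.exp (-(2 * θ))) := by
                refine setLIntegral_mono' measurableSet_Ioo fun θ hθ => ?_
                refine ENNReal.ofReal_le_ofReal ?_
                have hδ1 : δ ≤ 1 := min_le_right _ _
                have h1 : (1:ℝ) < θ := hθ.1
                have h2 : θ < 2 := by linarith [hθ.2]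
                have he : Real.exp (-4) ≤ Real.exp (-(2 * θ)) :=
                  Real.exp_le_exp.2 (by linarith)
                have hsq : (1:ℝ) ≤ θ ^ 2 := by nlinarith
                nlinarith [Real.exp_pos (-(2 * θ)), Real.exp_pos (-4)]
        rw [hzero] at hpos
        exact lt_irrefl _ hpos
      · exact h0B (heq ▸ ht)
    · intro ht
      rw [mem_Ioi] at ht
      rw [hB]
      refine ⟨Filter.Eventually.of_forall fun θ => by rw [hL]; positivity, ?_⟩
      calc ∫⁻ θ, ENNReal.ofReal (1 / (L θ + t)) ∂Q
          ≤ ∫⁻ _, ENNReal.ofReal (1 / t) ∂Q := by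
            refine lintegral_mono fun θ => ENNReal.ofReal_le_ofReal ?_
            refine one_div_le_one_div_of_le ht ?_
            rw [hL]; nlinarith [sq_nonneg (θ - 1)]
        _ = ENNReal.ofReal (1 / t) * Q univ := lintegral_const _
        _ < ⊤ := ENNReal.mul_lt_top ENNReal.ofReal_lt_top hQfin
  refine ⟨P1, P2', h0B, ?_, hBI⟩
  rw [hBI]
  exact csInf_Ioi
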